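/- Let φ ∈ L^∞(𝕋ⁿ). If the Toeplitz operator T_{φ,△ₙ} is the zero operator on H²(∂_d△ₙ), then φ = 0 almost everywhere on 𝕋ⁿ. Consequently the map φ ↦ T_{φ,△ₙ} from L^∞(𝕋ⁿ) to bounded operators on H²(∂_d△ₙ) is injective. -/

import Mathlib

open MeasureTheory Filter Topology ComplexConjugate

noncomputable section

instance fact_one_pos : Fact ((0:ℝ) < 1) := ⟨one_pos⟩

abbrev Torus (n : ℕ) := Fin n → AddCircle (1 : ℝ)

abbrev L2T (n : ℕ) := Lp ℂ 2 (volume : Measure (Torus n))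

abbrev LinfT (n : ℕ) := Lp ℂ ⊤ (volume : Measure (Torus n))

def char {n : ℕ} (α : Fin n → ℤ) : Torus n → ℂ := fun x => ∏ j, fourier (α j) (x j)

lemma char_continuous {n : ℕ} (α : Fin n → ℤ) : Continuous (char α) :=
  continuous_finsetProd _ fun j _ => (fourier (α j)).continuous.comp (continuous_apply j)

lemma char_memLp {n : ℕ} (α : Fin n → ℤ) (p : ENNReal) :
    MemLp (char α) p (volume : Measure (Torus n)) := by
  refine (memLp_top_of_bound ((char_continuous α).aestronglyMeasurable) 1 ?_).mono_exponent le_top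
  filter_upwards with x
  simp only [char, norm_prod]
  calc ∏ j, ‖fourier (α j) (x j)‖
      = ∏ j : Fin n, (1:ℝ) := by
        refine Finset.prod_congr rfl fun j _ => ?_
        rw [fourier_apply]; exact Circle.norm_coe _
    _ ≤ 1 := by simp

def charL2 {n : ℕ} (α : Fin n → ℤ) : L2T n := (char_memLp α 2).toLp (char α)

def hardyT (n : ℕ) : Submodule ℂ (L2T n) :=
  (Submodule.span ℂ
    (charL2 '' {α : Fin n → ℤ | ∀ k : Fin n, 0 ≤ (∑ j ∈ Finset.Iic k, α j) + (k.val : ℤ)})).topologicalClosure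

def hardyD (n : ℕ) : Submodule ℂ (L2T n) :=
  (Submodule.span ℂ (charL2 '' {α : Fin n → ℤ | ∀ j, 0 ≤ α j})).topologicalClosure

instance hardyT.completeSpace (n : ℕ) : CompleteSpace (hardyT n) :=
  (Submodule.isClosed_topologicalClosure _).completeSpace_coe

instance hardyD.completeSpace (n : ℕ) : CompleteSpace (hardyD n) :=
  (Submodule.isClosed_topologicalClosure _).completeSpace_coe

def IsToeplitzOn {n : ℕ} (K : Submodule ℂ (L2T n)) (φ : Torus n → ℂ) (T : K →L[ℂ] K) : Prop :=
  ∀ f g : K,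
    (inner ℂ ((g : L2T n)) ((T f : L2T n)) : ℂ) =
      ∫ x, conj ((g : L2T n) x) * (φ x * (f : L2T n) x) ∂volume

def IsCoordMult {n : ℕ} (j : Fin n) (M : hardyT n →L[ℂ] hardyT n) : Prop :=
  ∀ f : hardyT n,
    ((M f : L2T n) : Torus n → ℂ) =ᵐ[volume]
      fun x => fourier 1 (x j) * ((f : L2T n) : Torus n → ℂ) x

def IsHankelT {n : ℕ} (φ : Torus n → ℂ) (H : hardyT n →L[ℂ] L2T n) : Prop :=
  (∀ f : hardyT n, H f ∈ (hardyT n)ᗮ) ∧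
    ∀ f : hardyT n, ∀ g : L2T n, g ∈ (hardyT n)ᗮ →
      (inner ℂ g (H f) : ℂ) = ∫ x, conj (g x) * (φ x * (f : L2T n) x) ∂volume

def IsAnalyticSymbolF {n : ℕ} (φ : Torus n → ℂ) : Prop :=
  ∀ α : Fin n → ℤ, (¬ ∀ k : Fin n, 0 ≤ ∑ j ∈ Finset.Iic k, α j) →
    ∫ x, φ x * char (-α) x ∂(volume : Measure (Torus n)) = 0

def IsInnerSymbolF {n : ℕ} (φ : Torus n → ℂ) : Prop :=
  IsAnalyticSymbolF φ ∧ ∀ᵐ x ∂(volume : Measure (Torus n)), ‖φ x‖ = 1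

def tauMap {n : ℕ} (x : Torus n) : Torus n := fun j => ∑ k ∈ Finset.Ici j, x k

def sigmaMap {n : ℕ} (x : Torus n) : Torus n :=
  fun j => if h : (j : ℕ) + 1 < n then x j - x ⟨(j : ℕ) + 1, h⟩ else x j

def jacF {n : ℕ} (x : Torus n) : ℂ := ∏ j : Fin n, fourier (j.val : ℤ) (x j)

def jacInvF {n : ℕ} (x : Torus n) : ℂ :=
  ∏ j : Fin n, fourier (if j.val = 0 then (0 : ℤ) else -1) (x j)


lemma char_norm_le {n : ℕ} (α : Fin n → ℤ) (x : Torus n) : ‖char α x‖ ≤ 1 := by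
  simp only [char, norm_prod]
  calc ∏ j, ‖fourier (α j) (x j)‖
      = ∏ j : Fin n, (1:ℝ) := by
        refine Finset.prod_congr rfl fun j _ => ?_
        rw [fourier_apply]; exact Circle.norm_coe _
    _ ≤ 1 := by simp

lemma char_mul_char {n : ℕ} (α β : Fin n → ℤ) (x : Torus n) :
    char α x * char β x = char (α + β) x := by
  simp only [char, ← Finset.prod_mul_distrib]
  exact Finset.prod_congr rfl fun j _ => (fourier_add (m := α j) (n := β j)).symm

lemma char_conj {n : ℕ} (α : Fin n → ℤ) (x : Torus n) :
    conj (char α x) = char (-α) x := by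
  simp only [char, map_prod]
  exact Finset.prod_congr rfl fun j _ => (fourier_neg (n := α j)).symm

lemma char_zero_fun {n : ℕ} : char (0 : Fin n → ℤ) = fun _ => 1 := by
  funext x; simp [char, fourier_zero]

def charCM {n : ℕ} (α : Fin n → ℤ) : C(Torus n, ℂ) := ⟨char α, char_continuous α⟩

def charSubalgebra (n : ℕ) : StarSubalgebra ℂ C(Torus n, ℂ) where
  toSubalgebra := Algebra.adjoin ℂ (Set.range (charCM (n := n)))
  star_mem' := by
    show Algebra.adjoin ℂ (Set.range (charCM (n := n))) ≤
      star (Algebra.adjoin ℂ (Set.range (charCM (n := n))))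
    refine Algebra.adjoin_le ?_
    rintro - ⟨α, rfl⟩
    refine Algebra.subset_adjoin ⟨-α, ContinuousMap.ext fun x => ?_⟩
    show char (-α) x = star (char α x)
    rw [Complex.star_def, char_conj]

theorem charSubalgebra_coe (n : ℕ) :
    Subalgebra.toSubmodule (charSubalgebra n).toSubalgebra
      = Submodule.span ℂ (Set.range (charCM (n := n))) := by
  apply Algebra.adjoin_eq_span_of_subset
  refine Set.Subset.trans ?_ Submodule.subset_span
  intro x hx
  refine Submonoid.closure_induction (fun _ => id) ⟨0, ?_⟩ ?_ hx
  · ext1 z; exact congrFun char_zero_fun z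
  · rintro - - - - ⟨a, rfl⟩ ⟨b, rfl⟩
    exact ⟨a + b, by ext1 z; exact (char_mul_char a b z).symm⟩

theorem charSubalgebra_separatesPoints (n : ℕ) : (charSubalgebra n).SeparatesPoints := by
  intro x y hxy
  obtain ⟨j, hj⟩ : ∃ j, x j ≠ y j := by
    by_contra h
    push_neg at h
    exact hxy (funext h)
  have key : ∀ z : Torus n, (charCM (Pi.single j 1)) z = AddCircle.toCircle (z j) := by
    intro z
    dsimp only [charCM, ContinuousMap.coe_mk, char]
    rw [Finset.prod_eq_single j (fun b _ hb => by simp [Pi.single_apply, hb, fourier_zero])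
      (by simp)]
    rw [Pi.single_eq_same, fourier_one]
  refine ⟨_, ⟨charCM (Pi.single j 1), Algebra.subset_adjoin ⟨_, rfl⟩, rfl⟩, ?_⟩
  dsimp only
  rw [key x, key y]
  intro h
  rw [Circle.coe_inj] at h
  exact hj (AddCircle.injective_toCircle one_ne_zero h)

theorem span_char_closure_eq_top (n : ℕ) :
    (Submodule.span ℂ (Set.range (charCM (n := n)))).topologicalClosure = ⊤ := by
  rw [← charSubalgebra_coe]
  exact congr_arg (Subalgebra.toSubmodule <| StarSubalgebra.toSubalgebra ·)
    (ContinuousMap.starSubalgebra_topologicalClosure_eq_top_of_separatesPoints _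
      (charSubalgebra_separatesPoints n))

theorem span_charLp_closure_eq_top (n : ℕ) :
    (Submodule.span ℂ (Set.range fun α : Fin n → ℤ =>
      ContinuousMap.toLp (E := ℂ) 2 (volume : Measure (Torus n)) ℂ
        (charCM α))).topologicalClosure = ⊤ := by
  convert (ContinuousMap.toLp_denseRange (E := ℂ) (𝕜 := ℂ)
      (μ := (volume : Measure (Torus n))) (p := 2)
      (by norm_num : (2 : ENNReal) ≠ ⊤)).topologicalClosure_map_submodule
      (span_char_closure_eq_top n)
  · rfl
  erw [Submodule.map_span, Set.range_comp]
  simp only [ContinuousLinearMap.coe_coe]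

lemma char_integrable_mul {n : ℕ} (φ : LinfT n) (γ : Fin n → ℤ) :
    Integrable (fun x => (φ : Torus n → ℂ) x * char γ x) (volume : Measure (Torus n)) := by
  have hφ : Integrable (φ : Torus n → ℂ) (volume : Measure (Torus n)) :=
    memLp_one_iff_integrable.mp ((Lp.memLp φ).mono_exponent le_top)
  have := hφ.bdd_mul ((char_continuous γ).aestronglyMeasurable) (c := 1) (Eventually.of_forall fun x => char_norm_le γ x)
  refine this.congr ?_
  filter_upwards with x using mul_comm _ _

/-- The key uniqueness fact: an `L^∞` symbol all of whose Fourier coefficients vanish is zero. -/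
lemma eq_zero_of_coeffs {n : ℕ} (φ : LinfT n)
    (h : ∀ γ : Fin n → ℤ, ∫ x, (φ : Torus n → ℂ) x * char γ x ∂(volume : Measure (Torus n)) = 0) :
    φ = 0 := by
  have hφ2 : MemLp (φ : Torus n → ℂ) 2 (volume : Measure (Torus n)) :=
    (Lp.memLp φ).mono_exponent le_top
  set Φ : L2T n := hφ2.toLp _ with hΦ
  -- Φ is orthogonal to each charLp
  have horth : ∀ δ : Fin n → ℤ,
      (inner ℂ (ContinuousMap.toLp (E := ℂ) 2 (volume : Measure (Torus n)) ℂ (charCM δ)) Φ : ℂ) = 0 := by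
    intro δ
    rw [MeasureTheory.L2.inner_def]
    rw [← h (-δ)]
    refine integral_congr_ae ?_
    filter_upwards [ContinuousMap.coeFn_toLp (𝕜 := ℂ) (p := 2) (volume : Measure (Torus n)) (charCM δ),
      hφ2.coeFn_toLp] with x h1 h2
    rw [h1, h2, RCLike.inner_apply']
    show conj ((charCM δ) x) * (φ : Torus n → ℂ) x = _
    show conj (char δ x) * (φ : Torus n → ℂ) x = _
    rw [char_conj, mul_comm]
  have hmem : Φ ∈ (Submodule.span ℂ (Set.range fun α : Fin n → ℤ =>
      ContinuousMap.toLp (E := ℂ) 2 (volume : Measure (Torus n)) ℂ (charCM α)))ᗮ := by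
    rw [Submodule.mem_orthogonal]
    intro u hu
    induction hu using Submodule.span_induction with
    | mem u hu => obtain ⟨δ, rfl⟩ := hu; exact horth δ
    | zero => simp
    | add u v _ _ hu hv => rw [inner_add_left, hu, hv, add_zero]
    | smul c u _ hu => rw [inner_smul_left (𝕜 := ℂ), hu, mul_zero]
  rw [Submodule.topologicalClosure_eq_top_iff.mp (span_charLp_closure_eq_top n)] at hmem
  have hΦ0 : Φ = 0 := by simpa using hmem
  have : (φ : Torus n → ℂ) =ᵐ[volume] 0 := by
    have h1 : ⇑Φ =ᵐ[volume] (φ : Torus n → ℂ) := hφ2.coeFn_toLp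
    have h2 : ⇑Φ =ᵐ[volume] 0 := by rw [hΦ0]; exact Lp.coeFn_zero ℂ 2 _
    exact h1.symm.trans h2
  exact Lp.ext (this.trans (Lp.coeFn_zero ℂ ⊤ _).symm)

lemma mem_hardyT {n : ℕ} {α : Fin n → ℤ}
    (hα : ∀ k : Fin n, 0 ≤ (∑ j ∈ Finset.Iic k, α j) + (k.val : ℤ)) :
    charL2 α ∈ hardyT n :=
  Submodule.le_topologicalClosure _ (Submodule.subset_span ⟨α, hα, rfl⟩)


lemma coeffEq {n : ℕ} (φ : LinfT n) (T : hardyT n →L[ℂ] hardyT n)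
    (hT : IsToeplitzOn (hardyT n) (⇑φ) T) {α β : Fin n → ℤ}
    (hα : ∀ k : Fin n, 0 ≤ (∑ j ∈ Finset.Iic k, α j) + (k.val : ℤ))
    (hβ : ∀ k : Fin n, 0 ≤ (∑ j ∈ Finset.Iic k, β j) + (k.val : ℤ)) :
    (inner ℂ (((⟨charL2 β, mem_hardyT hβ⟩ : hardyT n) : L2T n))
        ((T ⟨charL2 α, mem_hardyT hα⟩ : L2T n)) : ℂ)
      = ∫ x, (φ : Torus n → ℂ) x * char (α - β) x ∂(volume : Measure (Torus n)) := by
  rw [hT ⟨charL2 α, mem_hardyT hα⟩ ⟨charL2 β, mem_hardyT hβ⟩]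
  refine integral_congr_ae ?_
  filter_upwards [(char_memLp α 2).coeFn_toLp, (char_memLp β 2).coeFn_toLp] with x h1 h2
  show conj ((((char_memLp β 2).toLp (char β)) : Torus n → ℂ) x) *
      ((φ : Torus n → ℂ) x * (((char_memLp α 2).toLp (char α)) : Torus n → ℂ) x) = _
  rw [h1, h2, char_conj]
  rw [show char (-β) x * ((φ : Torus n → ℂ) x * char α x)
      = (φ : Torus n → ℂ) x * (char α x * char (-β) x) by ring,
    char_mul_char]
  rw [sub_eq_add_neg]

lemma exists_decomp {n : ℕ} (hn : 2 ≤ n) (γ : Fin n → ℤ) :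
    ∃ α β : Fin n → ℤ,
      (∀ k : Fin n, 0 ≤ (∑ j ∈ Finset.Iic k, α j) + (k.val : ℤ)) ∧
      (∀ k : Fin n, 0 ≤ (∑ j ∈ Finset.Iic k, β j) + (k.val : ℤ)) ∧ α - β = γ := by
  have : NeZero n := ⟨by omega⟩
  set N : ℤ := ∑ j, |γ j| with hN
  have hN0 : 0 ≤ N := Finset.sum_nonneg fun j _ => abs_nonneg _
  set β : Fin n → ℤ := fun j => if j = 0 then N else 0 with hβdef
  have hβsum : ∀ k : Fin n, (∑ j ∈ Finset.Iic k, β j) = N := by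
    intro k
    rw [hβdef]
    rw [Finset.sum_ite_eq' (Finset.Iic k) (0 : Fin n) fun _ => N]
    simp [Fin.zero_le]
  refine ⟨γ + β, β, ?_, ?_, by ring⟩
  · intro k
    have h1 : ∑ j ∈ Finset.Iic k, (γ + β) j = (∑ j ∈ Finset.Iic k, γ j) + N := by
      rw [← hβsum k, ← Finset.sum_add_distrib]; rfl
    rw [h1]
    have h2 : |∑ j ∈ Finset.Iic k, γ j| ≤ N := by
      refine le_trans (Finset.abs_sum_le_sum_abs _ _) ?_
      exact Finset.sum_le_sum_of_subset_of_nonneg (Finset.subset_univ _)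
        fun j _ _ => abs_nonneg _
    have := neg_le_of_abs_le h2
    have : (0:ℤ) ≤ k.val := Int.ofNat_nonneg _
    omega
  · intro k
    rw [hβsum k]
    have : (0:ℤ) ≤ k.val := Int.ofNat_nonneg _
    omega


/-- If `T_{φ,△ₙ} = 0` then `φ = 0` a.e.; consequently `φ ↦ T_{φ,△ₙ}` is injective. -/
theorem stmt6 {n : ℕ} (hn : 2 ≤ n) :
    (∀ (φ : LinfT n) (T : hardyT n →L[ℂ] hardyT n),
        IsToeplitzOn (hardyT n) (⇑φ) T → T = 0 → φ = 0) ∧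
    (∀ (φ₁ φ₂ : LinfT n) (T₁ T₂ : hardyT n →L[ℂ] hardyT n),
        IsToeplitzOn (hardyT n) (⇑φ₁) T₁ → IsToeplitzOn (hardyT n) (⇑φ₂) T₂ →
        T₁ = T₂ → φ₁ = φ₂) := by
  have main : ∀ (φ₁ φ₂ : LinfT n) (T₁ T₂ : hardyT n →L[ℂ] hardyT n),
      IsToeplitzOn (hardyT n) (⇑φ₁) T₁ → IsToeplitzOn (hardyT n) (⇑φ₂) T₂ →
      T₁ = T₂ → φ₁ = φ₂ := by
    intro φ₁ φ₂ T₁ T₂ h1 h2 hT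
    subst hT
    rw [← sub_eq_zero]
    apply eq_zero_of_coeffs
    intro γ
    obtain ⟨α, β, hα, hβ, hγ⟩ := exists_decomp hn γ
    have e12 : (∫ x, (φ₁ : Torus n → ℂ) x * char (α - β) x ∂(volume : Measure (Torus n)))
        = ∫ x, (φ₂ : Torus n → ℂ) x * char (α - β) x ∂(volume : Measure (Torus n)) :=
      (coeffEq φ₁ T₁ h1 hα hβ).symm.trans (coeffEq φ₂ T₁ h2 hα hβ)
    rw [← hγ]
    calc ∫ x, ((φ₁ - φ₂ : LinfT n) : Torus n → ℂ) x * char (α - β) x ∂(volume : Measure (Torus n))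
        = ∫ x, ((φ₁ : Torus n → ℂ) x * char (α - β) x
            - (φ₂ : Torus n → ℂ) x * char (α - β) x) ∂(volume : Measure (Torus n)) := by
          refine integral_congr_ae ?_
          filter_upwards [Lp.coeFn_sub φ₁ φ₂] with x hx
          rw [hx]; show ((φ₁ : Torus n → ℂ) x - (φ₂ : Torus n → ℂ) x) * _ = _; ring
      _ = (∫ x, (φ₁ : Torus n → ℂ) x * char (α - β) x ∂(volume : Measure (Torus n)))
            - ∫ x, (φ₂ : Torus n → ℂ) x * char (α - β) x ∂(volume : Measure (Torus n)) :=
          integral_sub (char_integrable_mul φ₁ _) (char_integrable_mul φ₂ _)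
      _ = 0 := sub_eq_zero.mpr e12
  constructor
  · intro φ T hT hT0
    have hzero : IsToeplitzOn (hardyT n) (⇑(0 : LinfT n)) (0 : hardyT n →L[ℂ] hardyT n) := by
      intro f g
      have : ∀ᵐ x ∂(volume : Measure (Torus n)),
          conj ((g : L2T n) x) * (((0 : LinfT n) : Torus n → ℂ) x * (f : L2T n) x) = 0 := by
        filter_upwards [Lp.coeFn_zero ℂ ⊤ (volume : Measure (Torus n))] with x hx
        rw [hx]; show conj _ * ((0:ℂ) * _) = 0; ring
      rw [integral_congr_ae this, integral_zero]
      simp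
    exact main φ 0 T 0 hT hzero hT0
  · exact main
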